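/- arXiv:1506.06916 — 2 statements merged into one kernel-verified Lean document; each statement's English description precedes it below -/
import Mathlib

section
/- Let ρ, Θ, 𝒯 : ℝ × ℝ³ → ℝ and u, v : ℝ × ℝ³ → ℝ³ be continuously differentiable, and let G : ℝ → ℝ be continuously differentiable. Assume that at every point: ∂_t ρ + div_x(ρ u) = 0, ∂_t Θ + u·∇_x Θ = 0, and ∂_t 𝒯 + v·∇_x 𝒯 = 0. Then at every point the identity ∂_t( (1/2) ρ (G(Θ) − 𝒯)² ) + div_x( (1/2) ρ (G(Θ) − 𝒯)² u ) = ρ (G(Θ) − 𝒯) (v − u)·∇_x 𝒯 holds. -/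
open RealInnerProductSpace

/-- Three-dimensional Euclidean space. -/
abbrev E3 : Type := EuclideanSpace ℝ (Fin 3)

/-- Divergence of a vector field on `ℝ³`. -/
noncomputable def div3 (V : E3 → E3) (x : E3) : ℝ :=
  ∑ i : Fin 3, ⟪fderiv ℝ V x (EuclideanSpace.single i 1), EuclideanSpace.single i 1⟫

set_option linter.unusedVariables false

lemma inner_single_right' (a : E3) (i : Fin 3) : ⟪a, EuclideanSpace.single i (1:ℝ)⟫ = a i := by
  simp [EuclideanSpace.inner_single_right]

lemma sum_single (w : E3) : ∑ i, w i • EuclideanSpace.single i (1:ℝ) = w := by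
  ext j
  have : (∑ i, w i • EuclideanSpace.single i (1:ℝ)) j = ∑ i, (w i • EuclideanSpace.single i (1:ℝ)) j :=
    by rw [WithLp.ofLp_sum]; exact Finset.sum_apply j Finset.univ _
  rw [this]
  simp [EuclideanSpace.single_apply]

lemma div3_smul (f : E3 → ℝ) (V : E3 → E3) (x : E3)
    (hf : DifferentiableAt ℝ f x) (hV : DifferentiableAt ℝ V x) :
    div3 (fun y => f y • V y) x = fderiv ℝ f x (V x) + f x * div3 V x := by
  have hd : fderiv ℝ (fun y => f y • V y) x
      = f x • fderiv ℝ V x + (fderiv ℝ f x).smulRight (V x) := fderiv_smul hf hV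
  unfold div3
  rw [hd]
  have : ∀ i : Fin 3,
      ⟪(f x • fderiv ℝ V x + (fderiv ℝ f x).smulRight (V x)) (EuclideanSpace.single i 1),
        EuclideanSpace.single i (1:ℝ)⟫
      = f x * ⟪fderiv ℝ V x (EuclideanSpace.single i 1), EuclideanSpace.single i 1⟫
        + fderiv ℝ f x (EuclideanSpace.single i 1) * (V x) i := by
    intro i
    simp only [ContinuousLinearMap.add_apply, ContinuousLinearMap.smul_apply,
      ContinuousLinearMap.smulRight_apply, inner_add_left, real_inner_smul_left,
      inner_single_right']
  simp only [this, Finset.sum_add_distrib, ← Finset.mul_sum]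
  have h2 : ∑ i : Fin 3, fderiv ℝ f x (EuclideanSpace.single i 1) * (V x) i
      = fderiv ℝ f x (V x) := by
    have := congrArg (fderiv ℝ f x) (sum_single (V x))
    rw [map_sum] at this
    simp only [map_smul, smul_eq_mul] at this
    rw [← this]
    exact Finset.sum_congr rfl fun i _ => mul_comm _ _
  rw [h2]; ring

lemma inner_gradient (f : E3 → ℝ) (x h : E3) : ⟪h, gradient f x⟫ = fderiv ℝ f x h := by
  rw [real_inner_comm, gradient, InnerProductSpace.toDual_symm_apply]


/-- Local (pointwise) form of the stability lemma: if `ρ, u` satisfy the continuity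
equation, `Θ` is transported by `u` and `𝒯` is transported by `v`, then for any `C¹`
renormalization `G`,
`∂_t((1/2)ρ(G(Θ)−𝒯)²) + div((1/2)ρ(G(Θ)−𝒯)² u) = ρ(G(Θ)−𝒯)(v−u)·∇𝒯`. -/
theorem stability_lemma_pointwise
    (ρ Θ T : ℝ → E3 → ℝ) (u v : ℝ → E3 → E3) (G : ℝ → ℝ)
    (hρ : ContDiff ℝ 1 (fun p : ℝ × E3 => ρ p.1 p.2))
    (hΘ : ContDiff ℝ 1 (fun p : ℝ × E3 => Θ p.1 p.2))
    (hT : ContDiff ℝ 1 (fun p : ℝ × E3 => T p.1 p.2))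
    (hu : ContDiff ℝ 1 (fun p : ℝ × E3 => u p.1 p.2))
    (hv : ContDiff ℝ 1 (fun p : ℝ × E3 => v p.1 p.2))
    (hG : ContDiff ℝ 1 G)
    (hcont : ∀ t x, deriv (fun s => ρ s x) t + div3 (fun y => ρ t y • u t y) x = 0)
    (htransΘ : ∀ t x, deriv (fun s => Θ s x) t + ⟪u t x, gradient (Θ t) x⟫ = 0)
    (htransT : ∀ t x, deriv (fun s => T s x) t + ⟪v t x, gradient (T t) x⟫ = 0) :
    ∀ t x,
      deriv (fun s => (1 / 2) * ρ s x * (G (Θ s x) - T s x) ^ 2) t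
        + div3 (fun y => ((1 / 2) * ρ t y * (G (Θ t y) - T t y) ^ 2) • u t y) x
      = ρ t x * (G (Θ t x) - T t x) * ⟪v t x - u t x, gradient (T t) x⟫ := by
  intro t x
  -- section differentiability
  have hρx : DifferentiableAt ℝ (ρ t) x :=
    ((hρ.differentiable one_ne_zero).comp ((differentiable_const t).prodMk differentiable_id)).differentiableAt
  have hΘx : DifferentiableAt ℝ (Θ t) x :=
    ((hΘ.differentiable one_ne_zero).comp ((differentiable_const t).prodMk differentiable_id)).differentiableAt
  have hTx : DifferentiableAt ℝ (T t) x :=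
    ((hT.differentiable one_ne_zero).comp ((differentiable_const t).prodMk differentiable_id)).differentiableAt
  have hux : DifferentiableAt ℝ (u t) x :=
    ((hu.differentiable one_ne_zero).comp ((differentiable_const t).prodMk differentiable_id)).differentiableAt
  have hρt : DifferentiableAt ℝ (fun s => ρ s x) t :=
    ((hρ.differentiable one_ne_zero).comp (differentiable_id.prodMk (differentiable_const x))).differentiableAt
  have hΘt : DifferentiableAt ℝ (fun s => Θ s x) t :=
    ((hΘ.differentiable one_ne_zero).comp (differentiable_id.prodMk (differentiable_const x))).differentiableAt
  have hTt : DifferentiableAt ℝ (fun s => T s x) t :=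
    ((hT.differentiable one_ne_zero).comp (differentiable_id.prodMk (differentiable_const x))).differentiableAt
  set w : ℝ := G (Θ t x) - T t x with hw
  set g' : ℝ := deriv G (Θ t x) with hg'
  set ρ' : ℝ := deriv (fun s => ρ s x) t with hρ'
  set Θ' : ℝ := deriv (fun s => Θ s x) t with hΘ'
  set T' : ℝ := deriv (fun s => T s x) t with hT'
  set U : E3 := u t x with hU
  set dρ : ℝ := fderiv ℝ (ρ t) x U with hdρ
  set dΘ : ℝ := fderiv ℝ (Θ t) x U with hdΘ
  set dTu : ℝ := fderiv ℝ (T t) x U with hdTu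
  set dTv : ℝ := fderiv ℝ (T t) x (v t x) with hdTv
  set divu : ℝ := div3 (u t) x with hdivu
  have hdG : HasDerivAt G g' (Θ t x) := ((hG.differentiable one_ne_zero) _).hasDerivAt
  -- time derivative
  have htime : deriv (fun s => (1 / 2) * ρ s x * (G (Θ s x) - T s x) ^ 2) t
      = (0 * ρ t x + (1/2) * ρ') * w ^ 2 + ((1/2) * ρ t x) * (2 * w ^ 1 * (g' * Θ' - T')) := by
    have h1 : HasDerivAt (fun s => G (Θ s x)) (g' * Θ') t := hdG.comp t hΘt.hasDerivAt
    have h2 : HasDerivAt (fun s => (G (Θ s x) - T s x) ^ 2) (2 * w ^ 1 * (g' * Θ' - T')) t := by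
      simpa [Pi.sub_def, Pi.pow_def, ← hT'] using (h1.sub hTt.hasDerivAt).pow 2
    exact (((hasDerivAt_const t ((1:ℝ)/2)).mul hρt.hasDerivAt).mul h2).deriv
  -- spatial function f
  set f : E3 → ℝ := fun y => (1 / 2) * ρ t y * (G (Θ t y) - T t y) ^ 2 with hf
  have hGΘx : DifferentiableAt ℝ (fun y => G (Θ t y)) x :=
    ((hG.differentiable one_ne_zero) _).comp x hΘx
  have hfx : DifferentiableAt ℝ f x :=
    ((differentiableAt_const _).mul hρx).mul ((hGΘx.sub hTx).pow 2)
  -- directional derivative of f along U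
  have hlin : HasDerivAt (fun s : ℝ => x + s • U) U 0 := by
    simpa using ((hasDerivAt_id (0:ℝ)).smul_const U).const_add x
  have hx0 : x + (0:ℝ) • U = x := by simp
  have hdir : ∀ (h : E3 → ℝ), DifferentiableAt ℝ h x →
      HasDerivAt (fun s : ℝ => h (x + s • U)) (fderiv ℝ h x U) 0 := by
    intro h hh
    have h2 : HasFDerivAt h (fderiv ℝ h x) (x + (0:ℝ) • U) := by rw [hx0]; exact hh.hasFDerivAt
    exact h2.comp_hasDerivAt 0 hlin
  -- f directional derivative two ways
  have hfdir : fderiv ℝ f x U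
      = (0 * ρ t x + (1/2) * dρ) * w ^ 2 + ((1/2) * ρ t x) * (2 * w ^ 1 * (g' * dΘ - dTu)) := by
    have hρl := hdir (ρ t) hρx
    have hΘl := hdir (Θ t) hΘx
    have hTl := hdir (T t) hTx
    have hGl : HasDerivAt (fun s : ℝ => G (Θ t (x + s • U))) (g' * dΘ) 0 := by
      have hdG' : HasDerivAt G g' (Θ t (x + (0:ℝ) • U)) := by rw [hx0]; exact hdG
      exact hdG'.comp 0 hΘl
    have h2 : HasDerivAt (fun s : ℝ => (G (Θ t (x + s • U)) - T t (x + s • U)) ^ 2)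
        (2 * w ^ 1 * (g' * dΘ - dTu)) 0 := by
      have := (hGl.sub hTl).pow 2
      simpa [Pi.sub_def, Pi.pow_def, hx0, ← hw, ← hdTu] using this
    have hA : HasDerivAt (fun s : ℝ => f (x + s • U))
        ((0 * ρ t x + (1/2) * dρ) * w ^ 2 + ((1/2) * ρ t x) * (2 * w ^ 1 * (g' * dΘ - dTu))) 0 := by
      have := (((hasDerivAt_const (0:ℝ) ((1:ℝ)/2)).mul hρl).mul h2)
      simpa [Pi.mul_def, hf, hx0, ← hw, ← hdρ] using this
    have hB : HasDerivAt (fun s : ℝ => f (x + s • U)) (fderiv ℝ f x U) 0 := hdir f hfx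
    exact hB.unique hA
  -- divergence of the flux
  have hdiv : div3 (fun y => ((1 / 2) * ρ t y * (G (Θ t y) - T t y) ^ 2) • u t y) x
      = fderiv ℝ f x U + f x * divu := div3_smul f (u t) x hfx hux
  -- rewrite the hypotheses
  have hc : ρ' + (dρ + ρ t x * divu) = 0 := by
    have := hcont t x
    rwa [div3_smul (ρ t) (u t) x hρx hux] at this
  have hΘeq : Θ' + dΘ = 0 := by
    have := htransΘ t x
    rwa [inner_gradient] at this
  have hTeq : T' + dTv = 0 := by
    have := htransT t x
    rwa [inner_gradient] at this
  rw [htime, hdiv, hfdir]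
  have hrhs : ⟪v t x - U, gradient (T t) x⟫ = dTv - dTu := by
    rw [inner_gradient, map_sub]
  rw [hrhs]
  have hfxv : f x = (1/2) * ρ t x * w ^ 2 := rfl
  rw [hfxv]
  linear_combination (1/2) * w^2 * hc + ρ t x * w * g' * hΘeq - ρ t x * w * hTeq
end

section
/- Let ρ, Z : ℝ × ℝ³ → ℝ, r¹, r² : ℝ × ℝ³ → ℝ be continuously differentiable, u : ℝ × ℝ³ → ℝ³ continuously differentiable, λ > 0 a constant, and assume ρ ≥ 0 everywhere. If at every point ∂_t ρ + u·∇_x ρ + ρ div_x u = r¹ and ∂_t Z + u·∇_x Z + Z div_x u = r², then at every point ∂_t( (Z+λ)/(ρ+λ) ) + div_x( ((Z+λ)/(ρ+λ)) u ) − [ (Z+λ)ρ/(ρ+λ)² + λ/(ρ+λ) ] div_x u = − r¹ (Z+λ)/(ρ+λ)² + r²/(ρ+λ). -/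
open RealInnerProductSpace

lemma fderiv_apply_eq_sum (L : E3 →L[ℝ] ℝ) (v : E3) :
    L v = ∑ i : Fin 3, ⟪v, EuclideanSpace.single i 1⟫ * L (EuclideanSpace.single i 1) := by
  have h := (EuclideanSpace.basisFun (Fin 3) ℝ).sum_repr' v
  conv_lhs => rw [← h]
  rw [map_sum]
  simp [EuclideanSpace.basisFun_apply, real_inner_comm]

lemma inner_grad (f : E3 → ℝ) (x v : E3) : ⟪v, gradient f x⟫ = fderiv ℝ f x v := by
  rw [real_inner_comm, gradient, InnerProductSpace.toDual_symm_apply]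


/-- Key algebraic identity of the DiPerna–Lions regularization argument: if
`∂_tρ + u·∇ρ + ρ div u = r¹` and `∂_tZ + u·∇Z + Z div u = r²`, then the shifted ratio
`(Z+λ)/(ρ+λ)`, `λ > 0`, satisfies
`∂_t((Z+λ)/(ρ+λ)) + div(((Z+λ)/(ρ+λ))u) − [(Z+λ)ρ/(ρ+λ)² + λ/(ρ+λ)] div u
  = −r¹(Z+λ)/(ρ+λ)² + r²/(ρ+λ)`. -/
theorem shifted_ratio_identity
    (ρ Z r1 r2 : ℝ → E3 → ℝ) (u : ℝ → E3 → E3) (lam : ℝ) (hlam : 0 < lam)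
    (hρ : ContDiff ℝ 1 (fun p : ℝ × E3 => ρ p.1 p.2))
    (hZ : ContDiff ℝ 1 (fun p : ℝ × E3 => Z p.1 p.2))
    (hr1 : ContDiff ℝ 1 (fun p : ℝ × E3 => r1 p.1 p.2))
    (hr2 : ContDiff ℝ 1 (fun p : ℝ × E3 => r2 p.1 p.2))
    (hu : ContDiff ℝ 1 (fun p : ℝ × E3 => u p.1 p.2))
    (hρnonneg : ∀ t x, 0 ≤ ρ t x)
    (heq1 : ∀ t x, deriv (fun s => ρ s x) t + ⟪u t x, gradient (ρ t) x⟫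
      + ρ t x * div3 (u t) x = r1 t x)
    (heq2 : ∀ t x, deriv (fun s => Z s x) t + ⟪u t x, gradient (Z t) x⟫
      + Z t x * div3 (u t) x = r2 t x) :
    ∀ t x,
      deriv (fun s => (Z s x + lam) / (ρ s x + lam)) t
        + div3 (fun y => ((Z t y + lam) / (ρ t y + lam)) • u t y) x
        - ((Z t x + lam) * ρ t x / (ρ t x + lam) ^ 2 + lam / (ρ t x + lam))
            * div3 (u t) x
      = -(r1 t x) * (Z t x + lam) / (ρ t x + lam) ^ 2 + r2 t x / (ρ t x + lam) := by
  intro t x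
  set a := Z t x + lam with ha
  set b := ρ t x + lam with hbdef
  have hbpos : 0 < b := by rw [hbdef]; have := hρnonneg t x; linarith
  have hb : b ≠ 0 := ne_of_gt hbpos
  -- differentiability in x
  have hρx : Differentiable ℝ (ρ t) :=
    (hρ.differentiable one_ne_zero).comp ((differentiable_const t).prodMk differentiable_id)
  have hZx : Differentiable ℝ (Z t) :=
    (hZ.differentiable one_ne_zero).comp ((differentiable_const t).prodMk differentiable_id)
  have hux : Differentiable ℝ (u t) :=
    (hu.differentiable one_ne_zero).comp ((differentiable_const t).prodMk differentiable_id)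
  -- differentiability in t
  have hρt : DifferentiableAt ℝ (fun s => ρ s x) t :=
    by have := ((hρ.differentiable one_ne_zero) (t, x)).comp t ((differentiableAt_id (𝕜 := ℝ) (x := t)).prodMk (differentiableAt_const (𝕜 := ℝ) x)); exact this
  have hZt : DifferentiableAt ℝ (fun s => Z s x) t :=
    by have := ((hZ.differentiable one_ne_zero) (t, x)).comp t ((differentiableAt_id (𝕜 := ℝ) (x := t)).prodMk (differentiableAt_const (𝕜 := ℝ) x)); exact this
  set ρ' := deriv (fun s => ρ s x) t
  set Z' := deriv (fun s => Z s x) t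
  set D := div3 (u t) x
  set Lρ := fderiv ℝ (ρ t) x with hLρ
  set LZ := fderiv ℝ (Z t) x with hLZ
  -- time derivative of the quotient
  have hbt : (fun s => ρ s x + lam) t ≠ 0 := hb
  have hderiv : deriv (fun s => (Z s x + lam) / (ρ s x + lam)) t
      = (Z' * b - a * ρ') / b ^ 2 := by
    have h1 : HasDerivAt (fun s => Z s x + lam) Z' t := (hZt.hasDerivAt).add_const lam
    have h2 : HasDerivAt (fun s => ρ s x + lam) ρ' t := (hρt.hasDerivAt).add_const lam
    have := (h1.fun_div h2 hbt).deriv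
    simpa using this
  -- spatial derivative of the quotient function
  have hZx' : HasFDerivAt (fun y => Z t y + lam) LZ x := (hZx x).hasFDerivAt.add_const lam
  have hρx' : HasFDerivAt (fun y => ρ t y + lam) Lρ x := (hρx x).hasFDerivAt.add_const lam
  have hinv : HasFDerivAt (fun y => (ρ t y + lam)⁻¹)
      (((1 : ℝ →L[ℝ] ℝ).smulRight (-(b ^ 2)⁻¹)).comp Lρ) x :=
    (hasFDerivAt_inv hb).comp x hρx'
  have hfq : HasFDerivAt (fun y => (Z t y + lam) / (ρ t y + lam))
      (a • (((1 : ℝ →L[ℝ] ℝ).smulRight (-(b ^ 2)⁻¹)).comp Lρ) + b⁻¹ • LZ) x := by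
    have := hZx'.fun_mul hinv
    simpa [div_eq_mul_inv] using this
  set Lf := a • (((1 : ℝ →L[ℝ] ℝ).smulRight (-(b ^ 2)⁻¹)).comp Lρ) + b⁻¹ • LZ with hLf
  have hdiv : div3 (fun y => ((Z t y + lam) / (ρ t y + lam)) • u t y) x
      = Lf (u t x) + (a / b) * D := by
    rw [div3_smul _ _ _ hfq.differentiableAt (hux x), hfq.fderiv]
  have hLfval : Lf (u t x) = a * (-(b ^ 2)⁻¹ * Lρ (u t x)) + b⁻¹ * LZ (u t x) := by
    simp only [hLf, ContinuousLinearMap.add_apply, ContinuousLinearMap.smul_apply,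
      ContinuousLinearMap.comp_apply, ContinuousLinearMap.smulRight_apply,
      ContinuousLinearMap.one_apply, smul_eq_mul]
    ring
  -- inner products with gradients
  have hgρ : ⟪u t x, gradient (ρ t) x⟫ = Lρ (u t x) := inner_grad _ _ _
  have hgZ : ⟪u t x, gradient (Z t) x⟫ = LZ (u t x) := inner_grad _ _ _
  have e1 := heq1 t x
  have e2 := heq2 t x
  rw [hgρ] at e1
  rw [hgZ] at e2
  rw [hderiv, hdiv, hLfval]
  have hρ' : ρ' = r1 t x - Lρ (u t x) - ρ t x * D := by linarith
  have hZ' : Z' = r2 t x - LZ (u t x) - Z t x * D := by linarith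
  rw [hρ', hZ']
  have hZa : Z t x = a - lam := by rw [ha]; ring
  have hρb : ρ t x = b - lam := by rw [hbdef]; ring
  rw [hZa, hρb]
  field_simp
  ring
end
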